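/- Let α be a real algebraic integer and suppose x = a/b is a positive rational in lowest terms (a, b ∈ ℕ, gcd(a,b)=1) with x^x = α. Then b = 1, i.e. x is a positive integer. -/

import Mathlib

theorem stmt_4 (α : ℝ) (hα : IsIntegral ℤ α) (a b : ℕ) (ha : 0 < a) (hb : 0 < b)
    (hab : Nat.Coprime a b)
    (h : ((a : ℝ) / b) ^ ((a : ℝ) / b) = α) : b = 1 := by
  have hb' : (b:ℝ) ≠ 0 := Nat.cast_ne_zero.mpr hb.ne'
  have hx : (0:ℝ) ≤ (a:ℝ)/b := by positivity
  set q : ℚ := (a:ℚ)^a / (b:ℚ)^a with hq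
  have hqR : (q:ℝ) = α ^ b := by
    rw [← h, ← Real.rpow_natCast (((a:ℝ)/b) ^ ((a:ℝ)/b)) b, ← Real.rpow_mul hx,
        div_mul_cancel₀ _ hb', Real.rpow_natCast]
    push_cast [hq]
    rw [div_pow]
  have hint : IsIntegral ℤ q := by
    rw [← isIntegral_algebraMap_iff (algebraMap ℚ ℝ).injective]
    rw [show (algebraMap ℚ ℝ) q = (q:ℝ) from rfl, hqR]
    exact hα.pow b
  obtain ⟨n, hn⟩ := IsIntegrallyClosed.isIntegral_iff.mp hint
  have hbq : ((b:ℚ))^a ≠ 0 := by positivity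
  have hmul : ((a:ℚ))^a = n * (b:ℚ)^a := by
    rw [show ((algebraMap ℤ ℚ) n : ℚ) = (n:ℚ) from rfl, hq] at hn
    field_simp at hn
    linarith [hn]
  have hdZ : (b:ℤ)^a ∣ (a:ℤ)^a := ⟨n, by exact_mod_cast hmul.trans (mul_comm _ _)⟩
  have hdN : b^a ∣ a^a := by exact_mod_cast hdZ
  have h1 : b^a ∣ 1 := by
    have := Nat.dvd_gcd hdN (dvd_refl (b^a))
    rwa [Nat.Coprime.gcd_eq_one (Nat.Coprime.pow a a hab)] at this
  have : b^a = 1 := Nat.eq_one_of_dvd_one h1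
  exact (pow_eq_one_iff.mp this).resolve_right ha.ne'
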